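/- The congruence subgroup Γ₀(2) of SL₂(ℤ) is generated by the three elements T := [[1,1],[0,1]], −I, and TB := [[−1,1],[−2,1]]; that is, the subgroup of SL₂(ℤ) generated by these three matrices equals Γ₀(2). -/

import Mathlib

open Matrix MatrixGroups CongruenceSubgroup

/-- The matrix `T = [[1,1],[0,1]]` in `SL(2, ℤ)`. -/
def Tz : SL(2, ℤ) := ⟨!![1, 1; 0, 1], by decide⟩

/-- The matrix `TB = T·(S T² S⁻¹) = [[−1,1],[−2,1]]` in `SL(2, ℤ)`. -/
def TBz : SL(2, ℤ) := ⟨!![-1, 1; -2, 1], by decide⟩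

/-- The matrix `−I` in `SL(2, ℤ)`. -/
def negIz : SL(2, ℤ) := ⟨!![-1, 0; 0, -1], by decide⟩

/-- Auxiliary: the matrix `L = [[1,0],[-2,1]]`. -/
def Lz : SL(2, ℤ) := ⟨!![1, 0; -2, 1], by decide⟩

lemma Tz_eq_T : Tz = ModularGroup.T := by
  ext i j
  fin_cases i <;> fin_cases j <;> rfl

lemma coe_Tz_zpow (n : ℤ) : ((Tz ^ n : SL(2, ℤ)) : Matrix (Fin 2) (Fin 2) ℤ)
    = !![1, n; 0, 1] := by
  rw [Tz_eq_T]; exact ModularGroup.coe_T_zpow n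

lemma coe_Lz_pow (k : ℕ) : ((Lz ^ k : SL(2, ℤ)) : Matrix (Fin 2) (Fin 2) ℤ)
    = !![1, 0; -2 * (k : ℤ), 1] := by
  induction k with
  | zero =>
    ext i j
    fin_cases i <;> fin_cases j <;> simp
  | succ k ih =>
    rw [pow_succ, Matrix.SpecialLinearGroup.coe_mul, ih]
    ext i j
    fin_cases i <;> fin_cases j <;>
      simp [Lz, Matrix.mul_apply, Fin.sum_univ_two] <;> push_cast <;> ring

lemma coe_Lz_zpow (m : ℤ) : ((Lz ^ m : SL(2, ℤ)) : Matrix (Fin 2) (Fin 2) ℤ)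
    = !![1, 0; -2 * m, 1] := by
  obtain ⟨k, rfl | rfl⟩ := Int.eq_nat_or_neg m
  · rw [zpow_natCast]; exact coe_Lz_pow k
  · have hM : Lz ^ (k : ℕ) * (show SL(2, ℤ) from ⟨!![1, 0; 2 * (k : ℤ), 1], by
        simp [Matrix.det_fin_two_of]⟩) = 1 := by
      ext i j
      rw [Matrix.SpecialLinearGroup.coe_mul, coe_Lz_pow]
      fin_cases i <;> fin_cases j <;>
        simp [Matrix.mul_apply, Fin.sum_univ_two] <;> ring
    have : (Lz ^ (-(k : ℤ)) : SL(2, ℤ))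
        = ⟨!![1, 0; 2 * (k : ℤ), 1], by simp [Matrix.det_fin_two_of]⟩ := by
      rw [_root_.zpow_neg, zpow_natCast]
      exact inv_eq_of_mul_eq_one_right hM
    rw [this]
    ext i j
    fin_cases i <;> fin_cases j <;> simp <;> ring

lemma T_smul (n : ℤ) (A : Matrix (Fin 2) (Fin 2) ℤ) :
    !![1, n; 0, 1] * A
      = !![A 0 0 + n * A 1 0, A 0 1 + n * A 1 1; A 1 0, A 1 1] := by
  ext i j
  fin_cases i <;> fin_cases j <;> simp [Matrix.mul_apply, Fin.sum_univ_two]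

lemma L_smul (m : ℤ) (A : Matrix (Fin 2) (Fin 2) ℤ) :
    !![1, 0; m, 1] * A
      = !![A 0 0, A 0 1; A 1 0 + m * A 0 0, A 1 1 + m * A 0 1] := by
  ext i j
  fin_cases i <;> fin_cases j <;>
    simp [Matrix.mul_apply, Fin.sum_univ_two] <;> ring

lemma exists_rem (x y : ℤ) (hy : y ≠ 0) :
    ∃ n : ℤ, 0 ≤ x + n * y ∧ x + n * y < y.natAbs := by
  refine ⟨-(x / y), ?_, ?_⟩ <;>
  · have h := Int.mul_ediv_add_emod x y
    have h1 := Int.emod_nonneg x hy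
    have h2 : x % y < (y.natAbs : ℤ) := by
      rcases hy.lt_or_gt with hlt | hlt
      · have he : x % y = x % (-y) := (Int.emod_neg x y).symm
        have := Int.emod_lt_of_pos x (show (0 : ℤ) < -y by omega)
        omega
      · have := Int.emod_lt_of_pos x hlt
        omega
    have key : x + -(x / y) * y = x % y := by linear_combination -h
    omega

lemma exists_centered (x y : ℤ) (hy : y ≠ 0) :
    ∃ m : ℤ, (x + 2 * m * y).natAbs ≤ y.natAbs := by
  have h2y : (2 : ℤ) * y ≠ 0 := by omega
  set z := x + (y.natAbs : ℤ) with hz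
  refine ⟨-(z / (2 * y)), ?_⟩
  have h := Int.mul_ediv_add_emod z (2 * y)
  have h1 := Int.emod_nonneg z h2y
  have h2 : z % (2 * y) < 2 * (y.natAbs : ℤ) := by
    rcases hy.lt_or_gt with hlt | hlt
    · have he : z % (2 * y) = z % (-(2 * y)) := (Int.emod_neg z (2*y)).symm
      have := Int.emod_lt_of_pos z (show (0 : ℤ) < -(2 * y) by omega)
      omega
    · have := Int.emod_lt_of_pos z (show (0 : ℤ) < 2 * y by omega)
      omega
  have key : x + 2 * (-(z / (2 * y))) * y = z % (2 * y) - (y.natAbs : ℤ) := by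
    linear_combination -h
  omega

lemma Tz_mem_Gamma0 : Tz ∈ Gamma0 2 := by
  rw [Gamma0_mem]; decide

lemma Lz_mem_Gamma0 : Lz ∈ Gamma0 2 := by
  rw [Gamma0_mem]; decide

lemma Tz_mul_Lz : Tz * Lz = TBz := by
  ext i j
  rw [Matrix.SpecialLinearGroup.coe_mul]
  fin_cases i <;> fin_cases j <;>
    simp [Tz, Lz, TBz, Matrix.mul_apply, Fin.sum_univ_two]

lemma Tz_mem : Tz ∈ Subgroup.closure {Tz, negIz, TBz} :=
  Subgroup.subset_closure (Set.mem_insert _ _)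

lemma negIz_mem : negIz ∈ Subgroup.closure {Tz, negIz, TBz} :=
  Subgroup.subset_closure (Set.mem_insert_of_mem _ (Set.mem_insert _ _))

lemma TBz_mem : TBz ∈ Subgroup.closure {Tz, negIz, TBz} :=
  Subgroup.subset_closure (Set.mem_insert_of_mem _ (Set.mem_insert_of_mem _ rfl))

lemma Lz_mem : Lz ∈ Subgroup.closure {Tz, negIz, TBz} := by
  have : Lz = Tz⁻¹ * TBz := by rw [← Tz_mul_Lz, inv_mul_cancel_left]
  rw [this]
  exact mul_mem (inv_mem Tz_mem) TBz_mem

lemma gamma0_le_closure (n : ℕ) : ∀ γ : SL(2, ℤ), γ ∈ Gamma0 2 →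
    ((γ : Matrix (Fin 2) (Fin 2) ℤ) 1 0).natAbs ≤ n →
    γ ∈ Subgroup.closure {Tz, negIz, TBz} := by
  induction n with
  | zero =>
    intro γ hγ hc
    have hc0 : (γ : Matrix (Fin 2) (Fin 2) ℤ) 1 0 = 0 := by omega
    have hdet : ((γ : Matrix (Fin 2) (Fin 2) ℤ)).det = 1 := γ.2
    rw [Matrix.det_fin_two, hc0] at hdet
    have had : (γ : Matrix (Fin 2) (Fin 2) ℤ) 0 0
        * (γ : Matrix (Fin 2) (Fin 2) ℤ) 1 1 = 1 := by linarith
    rcases Int.mul_eq_one_iff_eq_one_or_neg_one.mp had with ⟨h1, h2⟩ | ⟨h1, h2⟩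
    · have : γ = Tz ^ ((γ : Matrix (Fin 2) (Fin 2) ℤ) 0 1) := by
        ext i j
        rw [coe_Tz_zpow]
        fin_cases i <;> fin_cases j <;> simp [h1, h2, hc0]
      rw [this]
      exact zpow_mem Tz_mem _
    · have : γ = negIz * Tz ^ (-((γ : Matrix (Fin 2) (Fin 2) ℤ) 0 1)) := by
        ext i j
        rw [Matrix.SpecialLinearGroup.coe_mul, coe_Tz_zpow]
        fin_cases i <;> fin_cases j <;>
          simp [negIz, Matrix.mul_apply, Fin.sum_univ_two, h1, h2, hc0]
      rw [this]
      exact mul_mem negIz_mem (zpow_mem Tz_mem _)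
  | succ n ih =>
    intro γ hγ hc
    by_cases h : ((γ : Matrix (Fin 2) (Fin 2) ℤ) 1 0).natAbs ≤ n
    · exact ih γ hγ h
    set a : ℤ := (γ : Matrix (Fin 2) (Fin 2) ℤ) 0 0 with ha
    set b : ℤ := (γ : Matrix (Fin 2) (Fin 2) ℤ) 0 1 with hb
    set c : ℤ := (γ : Matrix (Fin 2) (Fin 2) ℤ) 1 0 with hcdef
    set d : ℤ := (γ : Matrix (Fin 2) (Fin 2) ℤ) 1 1 with hd
    have hcne : c ≠ 0 := by omega
    have hdet : a * d - b * c = 1 := by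
      have := γ.2
      rw [Matrix.det_fin_two] at this
      linarith
    have h2c : (2 : ℤ) ∣ c := by
      have := Gamma0_mem.mp hγ
      exact_mod_cast (ZMod.intCast_zmod_eq_zero_iff_dvd _ 2).mp this
    obtain ⟨n1, hn1a, hn1b⟩ := exists_rem a c hcne
    set a' : ℤ := a + n1 * c with ha'
    have ha'odd : ¬ (2 : ℤ) ∣ a' := by
      intro h2a'
      have h2a : (2 : ℤ) ∣ a := by
        have : (2 : ℤ) ∣ a' - n1 * c := h2a'.sub (Dvd.dvd.mul_left h2c n1)
        have heq : a' - n1 * c = a := by ring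
        rwa [heq] at this
      have : (2 : ℤ) ∣ 1 := by
        rw [← hdet]
        exact (h2a.mul_right d).sub (Dvd.dvd.mul_left h2c b)
      norm_num at this
    have ha'ne : a' ≠ 0 := by
      intro h0
      exact ha'odd (h0 ▸ dvd_zero 2)
    obtain ⟨m, hm⟩ := exists_centered c a' ha'ne
    set γ₂ : SL(2, ℤ) := Lz ^ (-m) * (Tz ^ n1 * γ) with hγ₂
    have h10 : (γ₂ : Matrix (Fin 2) (Fin 2) ℤ) 1 0 = c + 2 * m * a' := by
      rw [hγ₂, Matrix.SpecialLinearGroup.coe_mul, Matrix.SpecialLinearGroup.coe_mul,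
        coe_Lz_zpow, coe_Tz_zpow, T_smul, L_smul]
      simp [← ha, ← hcdef]
      try ring
      exact Or.inl ha'.symm
    have hγ₂Γ : γ₂ ∈ Gamma0 2 :=
      mul_mem (zpow_mem Lz_mem_Gamma0 _) (mul_mem (zpow_mem Tz_mem_Gamma0 _) hγ)
    have ha'lt : a'.natAbs < c.natAbs := by omega
    have hmem : γ₂ ∈ Subgroup.closure {Tz, negIz, TBz} := by
      apply ih γ₂ hγ₂Γ
      rw [h10]
      omega
    have hγeq : γ = Tz ^ (-n1) * (Lz ^ m * γ₂) := by
      rw [hγ₂]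
      group
    rw [hγeq]
    exact mul_mem (zpow_mem Tz_mem _) (mul_mem (zpow_mem Lz_mem _) hmem)

/-- `Γ₀(2)` is generated by `T`, `−I` and `TB`. -/
theorem closure_T_negI_TB_eq_gamma0_two :
    Subgroup.closure {Tz, negIz, TBz} = Gamma0 2 := by
  apply le_antisymm
  · rw [Subgroup.closure_le]
    intro x hx
    rcases hx with rfl | rfl | rfl <;> (rw [SetLike.mem_coe, Gamma0_mem]; decide)
  · intro γ hγ
    exact gamma0_le_closure ((γ : Matrix (Fin 2) (Fin 2) ℤ) 1 0).natAbs γ hγ le_rfl
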